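/- Consider Discounted HEDGE with K ≥ 2 experts, discounting factor γ = 1, time horizon N ≥ 1, penalty parameter β = 1 / (1 + √(2 · ln K / N)), initial weights w_k[1] = W > 0 for all k, losses l^{(k)}[n] ∈ [0,1], weight recurrence w_k[n+1] = w_k[n] · β^{l^{(k)}[n]}, probabilities p^{(k)}[n] = w_k[n] / Σ_{j=1}^{K} w_j[n], expert losses L_{k,N} = Σ_{n=1}^{N} l^{(k)}[n], and predictor loss L_N = Σ_{n=1}^{N} Σ_{k=1}^{K} p^{(k)}[n] l^{(k)}[n]. Let k* be an expert minimizing L_{k,N}. Then L_N ≤ L_{k*,N} + √(2 · N · ln K) + ln K. -/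

import Mathlib

/-- `2(1+a) ln(1+a) ≤ 2a + a²` for `a ≥ 0` (i.e. `ln x ≤ (x - 1/x)/2` for `x ≥ 1`). -/
lemma hedge_aux_log_ineq (a : ℝ) (ha : 0 ≤ a) :
    2 * (1 + a) * Real.log (1 + a) ≤ 2 * a + a ^ 2 := by
  have h1 : (0:ℝ) < 1 + a := by linarith
  set t := Real.log (1 + a) with ht
  have ht0 : 0 ≤ t := Real.log_nonneg (by linarith)
  have hs : t ≤ Real.sinh t := Real.self_le_sinh_iff.mpr ht0
  rw [Real.sinh_eq, Real.exp_log h1, Real.exp_neg, Real.exp_log h1] at hs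
  have h2 : t ≤ ((1 + a) - (1 + a)⁻¹) / 2 := hs
  have h3 : (1 + a)⁻¹ * (1 + a) = 1 := inv_mul_cancel₀ (ne_of_gt h1)
  nlinarith [mul_le_mul_of_nonneg_right h2 (le_of_lt h1)]

theorem hedge_regret_bound
    (K : ℕ) (hK : 2 ≤ K) (W : ℝ) (hW : 0 < W)
    (N : ℕ) (hN : 1 ≤ N)
    (β : ℝ) (hβ : β = 1 / (1 + Real.sqrt (2 * Real.log K / N)))
    (w l : ℕ → ℕ → ℝ)
    (hl : ∀ k ∈ Finset.Icc 1 K, ∀ n, 1 ≤ n → l k n ∈ Set.Icc (0 : ℝ) 1)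
    (hw1 : ∀ k ∈ Finset.Icc 1 K, w k 1 = W)
    (hrec : ∀ k ∈ Finset.Icc 1 K, ∀ n, 1 ≤ n →
      w k (n + 1) = w k n * β ^ (l k n))
    (kstar : ℕ) (hkstar : kstar ∈ Finset.Icc 1 K)
    (hmin : ∀ k ∈ Finset.Icc 1 K,
      ∑ n ∈ Finset.Icc 1 N, l kstar n ≤ ∑ n ∈ Finset.Icc 1 N, l k n) :
    ∑ n ∈ Finset.Icc 1 N,
        ∑ k ∈ Finset.Icc 1 K,
          (w k n / ∑ j ∈ Finset.Icc 1 K, w j n) * l k n ≤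
      (∑ n ∈ Finset.Icc 1 N, l kstar n) +
        Real.sqrt (2 * N * Real.log K) + Real.log K := by
  -- basic positivity facts
  have hK1 : (1:ℝ) < (K:ℝ) := by exact_mod_cast hK.trans_lt' one_lt_two
  have hA : 0 < Real.log K := Real.log_pos hK1
  have hN0 : (0:ℝ) < (N:ℝ) := by exact_mod_cast hN
  set a : ℝ := Real.sqrt (2 * Real.log K / N) with hadef
  have ha2 : a ^ 2 = 2 * Real.log K / N := Real.sq_sqrt (by positivity)
  have ha0 : 0 < a := Real.sqrt_pos.mpr (by positivity)
  have h1a : (0:ℝ) < 1 + a := by linarith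
  have hβ0 : 0 < β := by rw [hβ]; positivity
  have hβ1 : β < 1 := by
    rw [hβ, div_lt_one h1a]; linarith
  -- positivity of weights
  have hwpos : ∀ n, 1 ≤ n → ∀ k ∈ Finset.Icc 1 K, 0 < w k n := by
    intro n hn
    induction n with
    | zero => omega
    | succ m ih =>
      intro k hk
      rcases Nat.lt_or_ge 1 (m+1) with h | h
      · have hm : 1 ≤ m := by omega
        rw [hrec k hk m hm]
        exact mul_pos (ih hm k hk) (Real.rpow_pos_of_pos hβ0 _)
      · have : m = 0 := by omega
        subst this
        rw [hw1 k hk]; exact hW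
  have hne : (Finset.Icc 1 K).Nonempty := Finset.nonempty_Icc.mpr (by omega)

  -- total weight and probabilities
  set T : ℕ → ℝ := fun n => ∑ j ∈ Finset.Icc 1 K, w j n with hTdef
  have hT : ∀ n, (∑ j ∈ Finset.Icc 1 K, w j n) = T n := fun n => rfl
  set P : ℕ → ℝ := fun n => ∑ k ∈ Finset.Icc 1 K, (w k n / T n) * l k n with hPdef
  have hP : ∀ n, (∑ k ∈ Finset.Icc 1 K, (w k n / T n) * l k n) = P n := fun n => rfl
  have hTpos : ∀ n, 1 ≤ n → 0 < T n := by
    intro n hn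
    exact Finset.sum_pos (fun k hk => hwpos n hn k hk) hne
  -- convexity bound : β^x ≤ 1 - (1-β)x on [0,1]
  have key : ∀ x : ℝ, 0 ≤ x → x ≤ 1 → β ^ x ≤ 1 - (1 - β) * x := by
    intro x hx0 hx1
    have h := convexOn_exp.2 (Set.mem_univ (0:ℝ)) (Set.mem_univ (Real.log β))
      (by linarith : (0:ℝ) ≤ 1 - x) hx0 (by ring)
    simp only [smul_eq_mul, mul_zero, zero_add, Real.exp_zero, mul_one] at h
    rw [Real.exp_log hβ0] at h
    calc β ^ x = Real.exp (Real.log β * x) := Real.rpow_def_of_pos hβ0 x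
      _ = Real.exp (x * Real.log β) := by rw [mul_comm]
      _ ≤ (1 - x) + x * β := h
      _ = 1 - (1 - β) * x := by ring
  -- one step bound on total weight
  have hstep : ∀ n, 1 ≤ n → T (n+1) ≤ T n * Real.exp (-((1 - β) * P n)) := by
    intro n hn
    have hTn := hTpos n hn
    have step1 : T (n+1) = ∑ k ∈ Finset.Icc 1 K, w k n * β ^ (l k n) := by
      rw [← hT]
      exact Finset.sum_congr rfl (fun k hk => hrec k hk n hn)
    have step2 : (∑ k ∈ Finset.Icc 1 K, w k n * β ^ (l k n)) ≤
        ∑ k ∈ Finset.Icc 1 K, w k n * (1 - (1 - β) * l k n) := by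
      refine Finset.sum_le_sum (fun k hk => ?_)
      have hlk := hl k hk n hn
      exact mul_le_mul_of_nonneg_left (key _ hlk.1 hlk.2) (le_of_lt (hwpos n hn k hk))
    have step3 : (∑ k ∈ Finset.Icc 1 K, w k n * (1 - (1 - β) * l k n)) =
        T n * (1 - (1 - β) * P n) := by
      have hTP : T n * P n = ∑ k ∈ Finset.Icc 1 K, w k n * l k n := by
        rw [hPdef]
        simp only []
        rw [Finset.mul_sum]
        refine Finset.sum_congr rfl (fun k hk => ?_)
        field_simp
      calc (∑ k ∈ Finset.Icc 1 K, w k n * (1 - (1 - β) * l k n))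
          = (∑ k ∈ Finset.Icc 1 K, w k n) - (1 - β) * ∑ k ∈ Finset.Icc 1 K, w k n * l k n := by
            rw [Finset.mul_sum, ← Finset.sum_sub_distrib]
            exact Finset.sum_congr rfl (fun k hk => by ring)
        _ = T n - (1 - β) * (T n * P n) := by rw [hT, hTP]
        _ = T n * (1 - (1 - β) * P n) := by ring
    have step4 : T n * (1 - (1 - β) * P n) ≤ T n * Real.exp (-((1 - β) * P n)) := by
      refine mul_le_mul_of_nonneg_left ?_ (le_of_lt hTn)
      have := Real.add_one_le_exp (-((1 - β) * P n))
      linarith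
    calc T (n+1) = ∑ k ∈ Finset.Icc 1 K, w k n * β ^ (l k n) := step1
      _ ≤ ∑ k ∈ Finset.Icc 1 K, w k n * (1 - (1 - β) * l k n) := step2
      _ = T n * (1 - (1 - β) * P n) := step3
      _ ≤ T n * Real.exp (-((1 - β) * P n)) := step4
  -- iterate
  have hiter : ∀ n, T (n+1) ≤ T 1 * Real.exp (-((1 - β) * ∑ m ∈ Finset.Icc 1 n, P m)) := by
    intro n
    induction n with
    | zero => simp
    | succ m ih =>
      have h1 : T (m+2) ≤ T (m+1) * Real.exp (-((1 - β) * P (m+1))) := hstep (m+1) (by omega)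
      have h2 : T (m+1) * Real.exp (-((1 - β) * P (m+1))) ≤
          (T 1 * Real.exp (-((1 - β) * ∑ k ∈ Finset.Icc 1 m, P k))) *
            Real.exp (-((1 - β) * P (m+1))) :=
        mul_le_mul_of_nonneg_right ih (le_of_lt (Real.exp_pos _))
      calc T (m+2) ≤ _ := h1
        _ ≤ _ := h2
        _ = T 1 * Real.exp (-((1 - β) * ∑ k ∈ Finset.Icc 1 (m+1), P k)) := by
            rw [Finset.sum_Icc_succ_top (by omega : 1 ≤ m + 1), mul_assoc, ← Real.exp_add]
            ring_nf
  -- closed form for the best expert's weight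
  have hws : ∀ n, w kstar (n+1) = W * β ^ (∑ m ∈ Finset.Icc 1 n, l kstar m) := by
    intro n
    induction n with
    | zero => simp [hw1 kstar hkstar]
    | succ m ih =>
      rw [hrec kstar hkstar (m+1) (by omega), ih,
        Finset.sum_Icc_succ_top (by omega : 1 ≤ m + 1), Real.rpow_add hβ0, mul_assoc]
  -- T 1 = K * W
  have hT1 : T 1 = (K:ℝ) * W := by
    rw [← hT]
    rw [Finset.sum_congr rfl (fun k hk => hw1 k hk), Finset.sum_const, Nat.card_Icc]
    simp [nsmul_eq_mul]
  -- combine : W β^{L*} ≤ K W exp(-(1-β) S)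
  set Lstar : ℝ := ∑ n ∈ Finset.Icc 1 N, l kstar n with hLdef
  set S : ℝ := ∑ n ∈ Finset.Icc 1 N, P n with hSdef
  have hlow : W * β ^ Lstar ≤ T (N+1) := by
    rw [← hws N, ← hT]
    exact Finset.single_le_sum (fun k hk => le_of_lt (hwpos (N+1) (by omega) k hk)) hkstar
  have hcomb : W * β ^ Lstar ≤ (K:ℝ) * W * Real.exp (-((1 - β) * S)) := by
    calc W * β ^ Lstar ≤ T (N+1) := hlow
      _ ≤ T 1 * Real.exp (-((1 - β) * S)) := hiter N
      _ = (K:ℝ) * W * Real.exp (-((1 - β) * S)) := by rw [hT1]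
  -- take logarithms
  have hlog : Lstar * Real.log β ≤ Real.log K - (1 - β) * S := by
    have h1 : Real.log (W * β ^ Lstar) ≤ Real.log ((K:ℝ) * W * Real.exp (-((1 - β) * S))) :=
      Real.log_le_log (by positivity) hcomb
    rw [Real.log_mul (ne_of_gt hW) (ne_of_gt (Real.rpow_pos_of_pos hβ0 _)),
      Real.log_rpow hβ0, Real.log_mul (by positivity) (ne_of_gt (Real.exp_pos _)),
      Real.log_mul (by positivity) (ne_of_gt hW), Real.log_exp] at h1
    linarith
  -- rewrite log β and 1 - β in terms of a
  have hlogβ : Real.log β = -Real.log (1 + a) := by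
    rw [hβ, one_div, Real.log_inv]
  have h1β : 1 - β = a / (1 + a) := by
    rw [hβ]; field_simp; ring
  -- main inequality in cleared form
  have hmain : (a / (1 + a)) * S ≤ Real.log K + Lstar * Real.log (1 + a) := by
    rw [h1β, hlogβ] at hlog; linarith
  -- bounds on Lstar
  have hL0 : 0 ≤ Lstar := Finset.sum_nonneg (fun n hn => (hl kstar hkstar n (Finset.mem_Icc.mp hn).1).1)
  have hLN : Lstar ≤ (N:ℝ) := by
    calc Lstar ≤ ∑ n ∈ Finset.Icc 1 N, (1:ℝ) :=
        Finset.sum_le_sum (fun n hn => (hl kstar hkstar n (Finset.mem_Icc.mp hn).1).2)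
      _ = (N:ℝ) := by simp [Nat.card_Icc]
  -- sqrt identity
  have hsq : Real.sqrt (2 * N * Real.log K) = N * a := by
    have : 2 * (N:ℝ) * Real.log K = (N * a) ^ 2 := by
      rw [mul_pow, ha2]; field_simp
    rw [this, Real.sqrt_sq (by positivity)]
  -- final arithmetic
  rw [hsq]
  show S ≤ Lstar + (N:ℝ) * a + Real.log K
  have hc := hedge_aux_log_ineq a (le_of_lt ha0)
  have hNA : (N:ℝ) * a ^ 2 = 2 * Real.log K := by
    rw [ha2]; field_simp
  have hmain' : a * S ≤ (Real.log K + Lstar * Real.log (1 + a)) * (1 + a) := by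
    have := mul_le_mul_of_nonneg_right hmain (le_of_lt h1a)
    calc a * S = (a / (1 + a)) * S * (1 + a) := by field_simp
      _ ≤ _ := this
  have hLc : Lstar * (2 * (1 + a) * Real.log (1 + a)) ≤ Lstar * (2 * a + a ^ 2) :=
    mul_le_mul_of_nonneg_left hc hL0
  nlinarith [mul_le_mul_of_nonneg_right hLN (le_of_lt (mul_pos ha0 ha0)), sq_nonneg a, mul_pos ha0 ha0]
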